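/- Combining both directions of the MAS reduction: for the triplet instance T = {(S,u,v) : (u,v) ∈ E} built from a finite directed graph G = (V,E) with E nonempty, and for every d ≥ 1, the maximum of acc(f;T) over all embeddings f : V ∪ {S} → ℝ^d equals the maximum of val(π) over all linear orders π of V. -/

import Mathlib

open Finset

/-- Any real-valued key on a finite type can be refined to an injective
`ℕ`-valued ranking. -/
lemma exists_injective_refine {V : Type*} [Fintype V] [DecidableEq V] (g : V → ℝ) :
    ∃ π : V → ℕ, Function.Injective π ∧ ∀ u v, g u < g v → π u < π v := by
  by_cases hV : Nonempty V
  · set N := Fintype.card V with hN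
    have hNpos : 0 < N := Fintype.card_pos
    let ρ : V → Fin N := Fintype.equivFin V
    let rank : V → ℕ := fun v => (univ.filter fun w => g w < g v).card
    have hrank : ∀ u v, g u < g v → rank u < rank v := by
      intro u v huv
      apply Finset.card_lt_card
      constructor
      · intro w hw
        simp only [mem_filter, mem_univ, true_and] at hw ⊢
        exact hw.trans huv
      · intro hsub
        have hu : u ∈ univ.filter fun w => g w < g v := by
          simp [huv]
        have := hsub hu
        simp at this
    refine ⟨fun v => N * rank v + (ρ v : ℕ), ?_, ?_⟩
    · intro u v huv
      have hru : (ρ u : ℕ) < N := (ρ u).isLt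
      have hrv : (ρ v : ℕ) < N := (ρ v).isLt
      have huv' : N * rank u + (ρ u : ℕ) = N * rank v + (ρ v : ℕ) := huv
      have h1 : rank u = rank v := by
        have hu' : (N * rank u + (ρ u : ℕ)) / N = rank u := by
          rw [Nat.mul_add_div hNpos, Nat.div_eq_of_lt hru, Nat.add_zero]
        have hv' : (N * rank v + (ρ v : ℕ)) / N = rank v := by
          rw [Nat.mul_add_div hNpos, Nat.div_eq_of_lt hrv, Nat.add_zero]
        rw [← hu', ← hv', huv']
      have h2 : (ρ u : ℕ) = (ρ v : ℕ) := by rw [h1] at huv'; omega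
      have : ρ u = ρ v := Fin.ext h2
      exact (Fintype.equivFin V).injective this
    · intro u v huv
      have h1 : rank u < rank v := hrank u v huv
      have hru : (ρ u : ℕ) < N := (ρ u).isLt
      calc N * rank u + (ρ u : ℕ) < N * rank u + N := by omega
        _ = N * (rank u + 1) := by ring
        _ ≤ N * rank v := Nat.mul_le_mul_left N h1
        _ ≤ N * rank v + (ρ v : ℕ) := Nat.le_add_right _ _
  · exact ⟨fun v => (hV ⟨v⟩).elim, fun u => (hV ⟨u⟩).elim, fun u => (hV ⟨u⟩).elim⟩

/-- Both directions of the MAS reduction: for the triplet instance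
`T = {(S,u,v) : (u,v) ∈ E}` and every `d ≥ 1`, the best accuracy over embeddings
`f : V ∪ {S} → ℝ^d` equals the best MAS value over linear orders `π` of `V`. -/
theorem stmt_12 {V : Type*} [Fintype V] [DecidableEq V] (d : ℕ) (hd : 1 ≤ d)
    (E : Finset (V × V)) (hE : E.Nonempty) :
    sSup {a : ℝ | ∃ f : Option V → EuclideanSpace ℝ (Fin d),
        a = ((E.filter fun e =>
              dist (f none) (f (some e.1)) < dist (f none) (f (some e.2))).card : ℝ)
            / E.card}
      = sSup {a : ℝ | ∃ π : V → ℕ, Function.Injective π ∧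
          a = ((E.filter fun e => π e.1 < π e.2).card : ℝ) / E.card} := by
  set A := {a : ℝ | ∃ f : Option V → EuclideanSpace ℝ (Fin d),
        a = ((E.filter fun e =>
              dist (f none) (f (some e.1)) < dist (f none) (f (some e.2))).card : ℝ)
            / E.card} with hA
  set B := {a : ℝ | ∃ π : V → ℕ, Function.Injective π ∧
          a = ((E.filter fun e => π e.1 < π e.2).card : ℝ) / E.card} with hB
  have hEpos : (0:ℝ) < E.card := by
    exact_mod_cast Finset.card_pos.mpr hE
  -- every order is realized by an embedding: B ⊆ A
  have hBA : B ⊆ A := by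
    rintro a ⟨π, hπ, rfl⟩
    refine ⟨fun o => Option.elim o 0
      (fun v => (π v : ℝ) • EuclideanSpace.single (⟨0, hd⟩ : Fin d) (1:ℝ)), ?_⟩
    have hdist : ∀ v : V, dist (0 : EuclideanSpace ℝ (Fin d))
        ((π v : ℝ) • EuclideanSpace.single (⟨0, hd⟩ : Fin d) (1:ℝ)) = (π v : ℝ) := by
      intro v
      rw [dist_zero_left, norm_smul, EuclideanSpace.norm_single]
      simp
    have hfil : (E.filter fun e =>
        dist ((fun o => Option.elim o 0
            (fun v => (π v : ℝ) • EuclideanSpace.single (⟨0, hd⟩ : Fin d) (1:ℝ))) none)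
          ((fun o => Option.elim o 0
            (fun v => (π v : ℝ) • EuclideanSpace.single (⟨0, hd⟩ : Fin d) (1:ℝ))) (some e.1)) <
        dist ((fun o => Option.elim o 0
            (fun v => (π v : ℝ) • EuclideanSpace.single (⟨0, hd⟩ : Fin d) (1:ℝ))) none)
          ((fun o => Option.elim o 0
            (fun v => (π v : ℝ) • EuclideanSpace.single (⟨0, hd⟩ : Fin d) (1:ℝ))) (some e.2)))
        = E.filter fun e => π e.1 < π e.2 := by
      apply Finset.filter_congr
      intro e _
      simp [hdist]
    rw [hfil]
  have hBne : B.Nonempty := by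
    refine ⟨_, (fun v => ((Fintype.equivFin V v : ℕ))), ?_, rfl⟩
    intro u v huv
    exact (Fintype.equivFin V).injective (Fin.ext huv)
  have hAne : A.Nonempty := hBne.mono hBA
  have hbd : ∀ (k : ℕ), (k:ℝ) ≤ E.card → (k : ℝ) / E.card ≤ 1 := by
    intro k hk
    rw [div_le_one hEpos]; exact hk
  have hAbdd : BddAbove A := by
    refine ⟨1, ?_⟩
    rintro a ⟨f, rfl⟩
    exact hbd _ (by exact_mod_cast Finset.card_filter_le _ _)
  have hBbdd : BddAbove B := by
    refine ⟨1, ?_⟩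
    rintro a ⟨π, _, rfl⟩
    exact hbd _ (by exact_mod_cast Finset.card_filter_le _ _)
  apply le_antisymm
  · apply csSup_le hAne
    rintro a ⟨f, rfl⟩
    obtain ⟨π, hπinj, hπ⟩ :=
      exists_injective_refine (fun v => dist (f none) (f (some v)))
    have hle : ((E.filter fun e =>
          dist (f none) (f (some e.1)) < dist (f none) (f (some e.2))).card : ℝ) / E.card
        ≤ ((E.filter fun e => π e.1 < π e.2).card : ℝ) / E.card := by
      gcongr
      apply hπ
    exact hle.trans (le_csSup hBbdd ⟨π, hπinj, rfl⟩)
  · exact csSup_le_csSup hAbdd hBne hBA
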